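/- arXiv:math/0607423 — 2 statements merged into one kernel-verified Lean document; each statement's English description precedes it below -/
import Mathlib

section
/- Let C be a monoidal category and let T : List C → C be the iterated tensor product, T [] = 𝟙_C and T (a :: L) = a ⊗ T L. Then the strictification st C — the category whose objects are lists of objects of C and whose hom-sets are st C (L, L') = C (T L, T L'), with composition and identities inherited from C — admits a monoidal structure in which the tensor product of objects is list concatenation, the tensor product of morphisms f : L₁ ⟶ L₁' and g : L₂ ⟶ L₂' is the conjugate of f ⊗ g by the canonical coherence isomorphisms T (L₁ ++ L₂) ≅ T L₁ ⊗ T L₂, and this monoidal structure is strict: its associator and its left and right unitors are given by identities (eqToIso of the equalities (L₁ ++ L₂) ++ L₃ = L₁ ++ (L₂ ++ L₃), [] ++ L = L, L ++ [] = L). -/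
open CategoryTheory Category MonoidalCategory

set_option autoImplicit false

universe v v₁ v₂ v₃ u u₁ u₂ u₃

namespace Strictification

variable {C : Type u} [Category.{v} C] [MonoidalCategory C]

/-- The iterated tensor product `T [] = 𝟙_ C`, `T (a :: L) = a ⊗ T L`. -/
def T : List C → C
  | [] => 𝟙_ C
  | a :: L => a ⊗ T L

@[simp] lemma T_nil : T ([] : List C) = 𝟙_ C := rfl
@[simp] lemma T_cons (a : C) (L : List C) : T (a :: L) = a ⊗ T L := rfl

/-- The strictification `st C` of `C`: objects are lists of objects of `C`,
and morphisms `L ⟶ L'` are the morphisms `T L ⟶ T L'` in `C`, with composition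
and identities inherited from `C`. -/
instance stCategory : Category.{v} (List C) where
  Hom L L' := T L ⟶ T L'
  id L := 𝟙 (T L)
  comp f g := f ≫ g
  id_comp f := Category.id_comp f
  comp_id f := Category.comp_id f
  assoc f g h := Category.assoc f g h

/-- The canonical coherence isomorphism `T (L ++ M) ≅ T L ⊗ T M`, built from
the associators and unitors of `C`. -/
noncomputable def Tapp : (L M : List C) → T (L ++ M) ≅ T L ⊗ T M
  | [], M => (λ_ (T M)).symm
  | a :: L, M => whiskerLeftIso a (Tapp L M) ≪≫ (α_ a (T L) (T M)).symm

/-- Regard a morphism `T L ⟶ T M` of `C` as a morphism `L ⟶ M` of `st C`. -/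
def stHom {L M : List C} (f : T L ⟶ T M) : L ⟶ M := f

/-- Regard a morphism `L ⟶ M` of `st C` as a morphism `T L ⟶ T M` of `C`. -/
def unSt {L M : List C} (f : L ⟶ M) : T L ⟶ T M := f

/-- The evaluation functor `st C ⥤ C`, `L ↦ T L`, identity on morphisms. -/
def evalF (C : Type u) [Category.{v} C] [MonoidalCategory C] : List C ⥤ C where
  obj L := T L
  map f := f
  map_id _ := rfl
  map_comp _ _ := rfl

lemma Tapp_nil (M : List C) : Tapp [] M = (λ_ (T M)).symm := rfl
lemma Tapp_cons (a : C) (L M : List C) :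
    Tapp (a :: L) M = whiskerLeftIso a (Tapp L M) ≪≫ (α_ a (T L) (T M)).symm := rfl

lemma eqToHom_whiskerLeft' (a : C) {X Y : C} (q : X = Y) (h : a ⊗ X = a ⊗ Y) :
    eqToHom h = a ◁ eqToHom q := by subst q; simp

lemma Tapp_assoc : ∀ (L M N : List C) (h : T ((L ++ M) ++ N) = T (L ++ (M ++ N))),
    (Tapp (L ++ M) N).hom ≫ (Tapp L M).hom ▷ T N ≫ (α_ (T L) (T M) (T N)).hom
      = eqToHom h ≫ (Tapp L (M ++ N)).hom ≫ T L ◁ (Tapp M N).hom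
  | [], M, N, h => by
    simp only [Tapp_nil, Iso.symm_hom, List.nil_append, eqToHom_refl, id_comp, T_nil]
    coherence
  | a :: L, M, N, h => by
    have IH := Tapp_assoc L M N (congrArg T (List.append_assoc L M N))
    simp only [List.cons_append, Tapp_cons, Iso.trans_hom, whiskerLeftIso_hom, Iso.symm_hom, T_cons]
    rw [eqToHom_whiskerLeft' a (congrArg T (List.append_assoc L M N)) h]
    rw [tensor_whiskerLeft a (T L) (Tapp M N).hom]
    simp only [assoc, Iso.inv_hom_id_assoc]
    rw [← MonoidalCategory.whiskerLeft_comp_assoc, ← MonoidalCategory.whiskerLeft_comp_assoc]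
    simp only [Category.assoc]
    rw [← IH]
    simp only [MonoidalCategory.whiskerLeft_comp, assoc]
    coherence

lemma Tapp_assoc_iso (L M N : List C) (h : T ((L ++ M) ++ N) = T (L ++ (M ++ N))) :
    Tapp (L ++ M) N ≪≫ whiskerRightIso (Tapp L M) (T N) ≪≫ α_ (T L) (T M) (T N)
      = eqToIso h ≪≫ Tapp L (M ++ N) ≪≫ whiskerLeftIso (T L) (Tapp M N) := by
  ext
  simpa using Tapp_assoc L M N h

lemma Tapp_nil_right : ∀ (L : List C) (h : T (L ++ []) = T L),
    Tapp L [] = eqToIso h ≪≫ (ρ_ (T L)).symm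
  | [], h => by
    ext
    simp only [Tapp_nil, Iso.trans_hom, eqToIso.hom, Iso.symm_hom, eqToHom_refl, id_comp]
    exact unitors_inv_equal
  | a :: L, h => by
    have IH := Tapp_nil_right L (congrArg T (List.append_nil L))
    ext
    simp only [List.cons_append, Tapp_cons, Iso.trans_hom, whiskerLeftIso_hom, eqToIso.hom,
      Iso.symm_hom, MonoidalCategory.whiskerLeft_comp, assoc, T_cons]
    have IH' : a ◁ (Tapp L []).hom ≫ (α_ a (T L) (T [])).inv
        = a ◁ eqToHom (congrArg T (List.append_nil L)) ≫ a ◁ (ρ_ (T L)).inv ≫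
          (α_ a (T L) (T [])).inv := by
      rw [IH]; exact MonoidalCategory.whiskerLeft_comp_assoc _ _ _ _
    rw [IH']
    show a ◁ eqToHom (congrArg T (List.append_nil L)) ≫ a ◁ (ρ_ (T L)).inv ≫
      (α_ a (T L) (𝟙_ C)).inv = eqToHom h ≫ (ρ_ (a ⊗ T L)).inv
    refine Eq.trans ?_ (congrArg (fun k => k ≫ (ρ_ (a ⊗ T L)).inv)
      (eqToHom_whiskerLeft' a (congrArg T (List.append_nil L)) h)).symm
    show _ = a ◁ eqToHom (congrArg T (List.append_nil L)) ≫ (ρ_ (a ⊗ T L)).inv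
    congr 1
    coherence

/-- The C-level tensor of morphisms conjugated by `Tapp`. -/
noncomputable def stT {L₁ L₁' L₂ L₂' : List C} (f : L₁ ⟶ L₁') (g : L₂ ⟶ L₂') :
    (L₁ ++ L₂) ⟶ (L₁' ++ L₂') :=
  stHom ((Tapp L₁ L₂).hom ≫ (unSt f ⊗ₘ unSt g) ≫ (Tapp L₁' L₂').inv)

lemma st_eqToHom {L L' : List C} (p : L = L') :
    (eqToHom p : L ⟶ L') = stHom (eqToHom (congrArg T p)) := by subst p; rfl

lemma stT_id (L₁ L₂ : List C) : stT (𝟙 L₁) (𝟙 L₂) = 𝟙 (L₁ ++ L₂) := by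
  show (Tapp L₁ L₂).hom ≫ (𝟙 (T L₁) ⊗ₘ 𝟙 (T L₂)) ≫ (Tapp L₁ L₂).inv = 𝟙 (T (L₁ ++ L₂))
  rw [id_tensorHom_id, id_comp, Iso.hom_inv_id]

lemma stT_comp {L₁ M₁ N₁ L₂ M₂ N₂ : List C} (f₁ : L₁ ⟶ M₁) (g₁ : M₁ ⟶ N₁)
    (f₂ : L₂ ⟶ M₂) (g₂ : M₂ ⟶ N₂) :
    stT (f₁ ≫ g₁) (f₂ ≫ g₂) = stT f₁ f₂ ≫ stT g₁ g₂ := by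
  show (Tapp L₁ L₂).hom ≫ ((unSt f₁ ≫ unSt g₁) ⊗ₘ (unSt f₂ ≫ unSt g₂)) ≫ (Tapp N₁ N₂).inv
    = ((Tapp L₁ L₂).hom ≫ (unSt f₁ ⊗ₘ unSt f₂) ≫ (Tapp M₁ M₂).inv) ≫
      ((Tapp M₁ M₂).hom ≫ (unSt g₁ ⊗ₘ unSt g₂) ≫ (Tapp N₁ N₂).inv)
  rw [← tensorHom_comp_tensorHom]
  simp only [assoc, Iso.inv_hom_id_assoc]

lemma stT_eqToHom {L₁ L₁' L₂ L₂' : List C} (p : L₁ = L₁') (q : L₂ = L₂') :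
    stT (eqToHom p) (eqToHom q) = eqToHom (by rw [p, q]) := by
  subst p; subst q
  simp only [eqToHom_refl]
  exact stT_id _ _

lemma stT_eqToHom_id {L₁ L₁' : List C} (p : L₁ = L₁') (L₂ : List C) :
    stT (eqToHom p) (𝟙 L₂) = eqToHom (by rw [p]) := by
  rw [show (𝟙 L₂ : L₂ ⟶ L₂) = eqToHom rfl by simp]
  exact stT_eqToHom p rfl

lemma stT_id_eqToHom (L₁ : List C) {L₂ L₂' : List C} (q : L₂ = L₂') :
    stT (𝟙 L₁) (eqToHom q) = eqToHom (by rw [q]) := by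
  rw [show (𝟙 L₁ : L₁ ⟶ L₁) = eqToHom rfl by simp]
  exact stT_eqToHom rfl q

lemma tAux_assoc (L₁ L₂ L₃ L₁' L₂' L₃' : List C)
    (f : T L₁ ⟶ T L₁') (g : T L₂ ⟶ T L₂') (h : T L₃ ⟶ T L₃')
    (p : T ((L₁ ++ L₂) ++ L₃) = T (L₁ ++ (L₂ ++ L₃)))
    (q : T ((L₁' ++ L₂') ++ L₃') = T (L₁' ++ (L₂' ++ L₃'))) :
    (Tapp (L₁ ++ L₂) L₃).hom ≫ (((Tapp L₁ L₂).hom ≫ (f ⊗ₘ g) ≫ (Tapp L₁' L₂').inv) ⊗ₘ h) ≫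
        (Tapp (L₁' ++ L₂') L₃').inv ≫ eqToHom q
      = eqToHom p ≫ (Tapp L₁ (L₂ ++ L₃)).hom ≫
          (f ⊗ₘ ((Tapp L₂ L₃).hom ≫ (g ⊗ₘ h) ≫ (Tapp L₂' L₃').inv)) ≫ (Tapp L₁' (L₂' ++ L₃')).inv := by
  have step1 : (Tapp (L₁ ++ L₂) L₃).hom ≫ (Tapp L₁ L₂).hom ▷ T L₃
      = eqToHom p ≫ (Tapp L₁ (L₂ ++ L₃)).hom ≫ T L₁ ◁ (Tapp L₂ L₃).hom ≫
          (α_ (T L₁) (T L₂) (T L₃)).inv := by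
    rw [← cancel_mono (α_ (T L₁) (T L₂) (T L₃)).hom]
    simp only [assoc, Iso.inv_hom_id, comp_id]
    exact Tapp_assoc L₁ L₂ L₃ p
  have E := Tapp_assoc L₁' L₂' L₃' q
  have step2 : (Tapp L₁' L₂').inv ▷ T L₃' ≫ (Tapp (L₁' ++ L₂') L₃').inv ≫ eqToHom q
      = (α_ (T L₁') (T L₂') (T L₃')).hom ≫ T L₁' ◁ (Tapp L₂' L₃').inv ≫
          (Tapp L₁' (L₂' ++ L₃')).inv := by
    rw [← cancel_epi ((Tapp L₁' L₂').hom ▷ T L₃'), ← cancel_epi (Tapp (L₁' ++ L₂') L₃').hom]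
    calc (Tapp (L₁' ++ L₂') L₃').hom ≫ (Tapp L₁' L₂').hom ▷ T L₃' ≫
          ((Tapp L₁' L₂').inv ▷ T L₃' ≫ (Tapp (L₁' ++ L₂') L₃').inv ≫ eqToHom q)
        = eqToHom q := by
          simp [← comp_whiskerRight_assoc]
      _ = (Tapp (L₁' ++ L₂') L₃').hom ≫ (Tapp L₁' L₂').hom ▷ T L₃' ≫
          ((α_ (T L₁') (T L₂') (T L₃')).hom ≫ T L₁' ◁ (Tapp L₂' L₃').inv ≫
            (Tapp L₁' (L₂' ++ L₃')).inv) := by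
          rw [reassoc_of% E]
          simp [← MonoidalCategory.whiskerLeft_comp_assoc]
  calc (Tapp (L₁ ++ L₂) L₃).hom ≫ (((Tapp L₁ L₂).hom ≫ (f ⊗ₘ g) ≫ (Tapp L₁' L₂').inv) ⊗ₘ h) ≫
        (Tapp (L₁' ++ L₂') L₃').inv ≫ eqToHom q
      = ((Tapp (L₁ ++ L₂) L₃).hom ≫ (Tapp L₁ L₂).hom ▷ T L₃) ≫ ((f ⊗ₘ g) ⊗ₘ h) ≫
          ((Tapp L₁' L₂').inv ▷ T L₃' ≫ (Tapp (L₁' ++ L₂') L₃').inv ≫ eqToHom q) := by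
        simp only [← tensorHom_id, tensorHom_comp_tensorHom, tensorHom_comp_tensorHom_assoc, id_comp, comp_id, assoc]
    _ = (eqToHom p ≫ (Tapp L₁ (L₂ ++ L₃)).hom ≫ T L₁ ◁ (Tapp L₂ L₃).hom ≫
          (α_ (T L₁) (T L₂) (T L₃)).inv) ≫ ((f ⊗ₘ g) ⊗ₘ h) ≫
          ((α_ (T L₁') (T L₂') (T L₃')).hom ≫ T L₁' ◁ (Tapp L₂' L₃').inv ≫
            (Tapp L₁' (L₂' ++ L₃')).inv) := by rw [step1, step2]
    _ = eqToHom p ≫ (Tapp L₁ (L₂ ++ L₃)).hom ≫ T L₁ ◁ (Tapp L₂ L₃).hom ≫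
          (f ⊗ₘ (g ⊗ₘ h)) ≫ T L₁' ◁ (Tapp L₂' L₃').inv ≫ (Tapp L₁' (L₂' ++ L₃')).inv := by
        simp only [assoc]
        rw [← associator_inv_naturality_assoc]
        simp
    _ = eqToHom p ≫ (Tapp L₁ (L₂ ++ L₃)).hom ≫
          (f ⊗ₘ ((Tapp L₂ L₃).hom ≫ (g ⊗ₘ h) ≫ (Tapp L₂' L₃').inv)) ≫
          (Tapp L₁' (L₂' ++ L₃')).inv := by
        simp only [← id_tensorHom, tensorHom_comp_tensorHom, tensorHom_comp_tensorHom_assoc, id_comp, comp_id, assoc]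

lemma tAux_assoc' (L₁ L₂ L₃ L₁' L₂' L₃' : List C)
    (f : T L₁ ⟶ T L₁') (g : T L₂ ⟶ T L₂') (h : T L₃ ⟶ T L₃')
    (p : T ((L₁ ++ L₂) ++ L₃) = T (L₁ ++ (L₂ ++ L₃)))
    (q : T ((L₁' ++ L₂') ++ L₃') = T (L₁' ++ (L₂' ++ L₃'))) :
    ((Tapp (L₁ ++ L₂) L₃).hom ≫ (((Tapp L₁ L₂).hom ≫ (f ⊗ₘ g) ≫ (Tapp L₁' L₂').inv) ⊗ₘ h) ≫
        (Tapp (L₁' ++ L₂') L₃').inv) ≫ eqToHom q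
      = eqToHom p ≫ ((Tapp L₁ (L₂ ++ L₃)).hom ≫
          (f ⊗ₘ ((Tapp L₂ L₃).hom ≫ (g ⊗ₘ h) ≫ (Tapp L₂' L₃').inv)) ≫ (Tapp L₁' (L₂' ++ L₃')).inv) := by
  simpa only [assoc] using tAux_assoc L₁ L₂ L₃ L₁' L₂' L₃' f g h p q

lemma stT_assoc_nat {X₁ X₂ X₃ Y₁ Y₂ Y₃ : List C}
    (f₁ : X₁ ⟶ Y₁) (f₂ : X₂ ⟶ Y₂) (f₃ : X₃ ⟶ Y₃) :
    stT (stT f₁ f₂) f₃ ≫ eqToHom (List.append_assoc Y₁ Y₂ Y₃) =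
      eqToHom (List.append_assoc X₁ X₂ X₃) ≫ stT f₁ (stT f₂ f₃) := by
  rw [st_eqToHom (List.append_assoc X₁ X₂ X₃), st_eqToHom (List.append_assoc Y₁ Y₂ Y₃)]
  exact tAux_assoc' X₁ X₂ X₃ Y₁ Y₂ Y₃ f₁ f₂ f₃ _ _

lemma lu' {L L' : List C} (f : T L ⟶ T L')
    (e : T (([] : List C) ++ L) = T L) (e' : T (([] : List C) ++ L') = T L') :
    ((Tapp [] L).hom ≫ (𝟙 (T ([] : List C)) ⊗ₘ f) ≫ (Tapp [] L').inv) ≫ eqToHom e'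
      = eqToHom e ≫ f := by
  simp only [List.nil_append] at e e' ⊢
  simp [Tapp_nil]

lemma stT_lu {L L' : List C} (f : L ⟶ L') :
    stT (𝟙 ([] : List C)) f ≫ eqToHom (List.nil_append L') =
      eqToHom (List.nil_append L) ≫ f := by
  rw [st_eqToHom (List.nil_append L), st_eqToHom (List.nil_append L')]
  exact lu' f _ _

lemma ru' {L L' : List C} (f : T L ⟶ T L')
    (e : T (L ++ ([] : List C)) = T L) (e' : T (L' ++ ([] : List C)) = T L') :
    ((Tapp L []).hom ≫ (f ⊗ₘ 𝟙 (T ([] : List C))) ≫ (Tapp L' []).inv) ≫ eqToHom e'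
      = eqToHom e ≫ f := by
  rw [Tapp_nil_right L e, Tapp_nil_right L' e']
  simp [rightUnitor_naturality]

lemma stT_ru {L L' : List C} (f : L ⟶ L') :
    stT f (𝟙 ([] : List C)) ≫ eqToHom (List.append_nil L') =
      eqToHom (List.append_nil L) ≫ f := by
  rw [st_eqToHom (List.append_nil L), st_eqToHom (List.append_nil L')]
  exact ru' f _ _

lemma st_pentagon (W X Y Z : List C) :
    stT (eqToHom (List.append_assoc W X Y)) (𝟙 Z) ≫
        eqToHom (List.append_assoc W (X ++ Y) Z) ≫
        stT (𝟙 W) (eqToHom (List.append_assoc X Y Z)) =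
      eqToHom (List.append_assoc (W ++ X) Y Z) ≫ eqToHom (List.append_assoc W X (Y ++ Z)) := by
  rw [stT_eqToHom_id, stT_id_eqToHom]
  simp [eqToHom_trans]

lemma st_triangle (X Y : List C) :
    eqToHom (List.append_assoc X [] Y) ≫ stT (𝟙 X) (eqToHom (List.nil_append Y)) =
      stT (eqToHom (List.append_nil X)) (𝟙 Y) := by
  rw [stT_id_eqToHom, stT_eqToHom_id]
  simp

/-- The strict monoidal structure data on `st C`. -/
noncomputable def stStruct : MonoidalCategoryStruct (List C) where
  tensorObj L M := L ++ M
  whiskerLeft X _ _ g := stT (𝟙 X) g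
  whiskerRight f Y := stT f (𝟙 Y)
  tensorHom f g := stT f g
  tensorUnit := []
  associator L M N := eqToIso (List.append_assoc L M N)
  leftUnitor L := eqToIso (List.nil_append L)
  rightUnitor L := eqToIso (List.append_nil L)

/-- The strict monoidal structure on `st C`. -/
noncomputable def stMonoidal : MonoidalCategory (List C) :=
  letI : MonoidalCategoryStruct (List C) := stStruct
  MonoidalCategory.ofTensorHom
    (id_tensorHom_id := stT_id)
    (id_tensorHom := fun X {Y₁ Y₂} f => rfl)
    (tensorHom_id := fun {X₁ X₂} f Y => rfl)
    (tensorHom_comp_tensorHom := fun f₁ f₂ g₁ g₂ => (stT_comp f₁ g₁ f₂ g₂).symm)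
    (associator_naturality := fun f₁ f₂ f₃ => stT_assoc_nat f₁ f₂ f₃)
    (leftUnitor_naturality := fun f => stT_lu f)
    (rightUnitor_naturality := fun f => stT_ru f)
    (pentagon := st_pentagon)
    (triangle := st_triangle)


theorem weak_monoidal_strictification_is_strict_monoidal
    (C : Type u) [Category.{v} C] [MonoidalCategory C] :
    ∃ M : MonoidalCategory (List C),
      ∃ hu : M.tensorUnit = ([] : List C),
      ∃ h : ∀ L L' : List C, M.tensorObj L L' = L ++ L',
        (∀ (L₁ L₁' L₂ L₂' : List C) (f : T L₁ ⟶ T L₁') (g : T L₂ ⟶ T L₂'),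
          M.tensorHom (stHom f) (stHom g) =
            eqToHom (h L₁ L₂) ≫
              stHom ((Tapp L₁ L₂).hom ≫ (f ⊗ₘ g) ≫ (Tapp L₁' L₂').inv) ≫
              eqToHom (h L₁' L₂').symm) ∧
        (∀ L₁ L₂ L₃ : List C,
          M.associator L₁ L₂ L₃ =
            eqToIso (by simp only [h]; exact List.append_assoc L₁ L₂ L₃)) ∧
        (∀ L : List C,
          M.leftUnitor L = eqToIso (by simp only [h, hu, List.nil_append])) ∧
        (∀ L : List C,
          M.rightUnitor L = eqToIso (by simp only [h, hu, List.append_nil])) := by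
  refine ⟨stMonoidal, rfl, fun _ _ => rfl, ?_, fun _ _ _ => rfl, fun _ => rfl, fun _ => rfl⟩
  intro L₁ L₁' L₂ L₂' f g
  show _ = 𝟙 _ ≫ _ ≫ 𝟙 _
  simp only [id_comp]
  exact (comp_id _).symm


end Strictification
end

section
/- Every monoidal category C is monoidally equivalent to a strict monoidal category: there exist a monoidal category D whose associator and left and right unitors are identities (given by eqToIso of equalities of objects), a strong monoidal functor F : D ⥤ C, a strong monoidal functor G : C ⥤ D, and monoidal natural isomorphisms G ⋙ F ≅ 𝟭 C and F ⋙ G ≅ 𝟭 D. -/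
open CategoryTheory Category MonoidalCategory

set_option autoImplicit false

universe v u

namespace Strictification

/-- A monoidal category is strict when its associator and its left and right
unitors are given by identities (`eqToIso` of equalities of objects). -/
def IsStrictMonoidal (D : Type u) [Category.{v} D] [MonoidalCategory D] : Prop :=
  (∃ h : ∀ X Y Z : D, (X ⊗ Y) ⊗ Z = X ⊗ (Y ⊗ Z), ∀ X Y Z : D, α_ X Y Z = eqToIso (h X Y Z)) ∧
  (∃ h : ∀ X : D, 𝟙_ D ⊗ X = X, ∀ X : D, λ_ X = eqToIso (h X)) ∧
  (∃ h : ∀ X : D, X ⊗ 𝟙_ D = X, ∀ X : D, ρ_ X = eqToIso (h X))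

/-- The data of a monoidal equivalence between monoidal categories `D` and `C`:
strong monoidal functors `F : D ⥤ C`, `G : C ⥤ D` together with monoidal
natural isomorphisms `G ⋙ F ≅ 𝟭 C` and `F ⋙ G ≅ 𝟭 D`. -/
structure MonoidalEquivalenceData (D : Type u) (C : Type u)
    [Category.{v} D] [MonoidalCategory D] [Category.{v} C] [MonoidalCategory C] where
  F : D ⥤ C
  G : C ⥤ D
  [mF : F.Monoidal]
  [mG : G.Monoidal]
  counitIso : G ⋙ F ≅ 𝟭 C
  unitIso : F ⋙ G ≅ 𝟭 D
  counit_monoidal : NatTrans.IsMonoidal counitIso.hom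
  unit_monoidal : NatTrans.IsMonoidal unitIso.hom

namespace Str

variable {C : Type u} [Category.{v} C] [MonoidalCategory C]

/-- Evaluation of a list as an iterated tensor product. -/
def eval : List C → C
  | [] => 𝟙_ C
  | X :: L => X ⊗ eval L

instance : Category.{v} (List C) where
  Hom L M := eval L ⟶ eval M
  id L := 𝟙 (eval L)
  comp f g := f ≫ g
  id_comp f := Category.id_comp (obj := C) f
  comp_id f := Category.comp_id (obj := C) f
  assoc f g h := Category.assoc (obj := C) f g h

/-- The structural isomorphism comparing evaluation of appended lists. -/
def evalIso : (L M : List C) → eval (L ++ M) ≅ eval L ⊗ eval M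
  | [], M => (λ_ (eval M)).symm
  | X :: L, M => (whiskerLeftIso X (evalIso L M)) ≪≫ (α_ X (eval L) (eval M)).symm

instance : MonoidalCategoryStruct (List C) where
  tensorObj L M := L ++ M
  tensorUnit := ([] : List C)
  whiskerLeft L M₁ M₂ f :=
    show eval (L ++ M₁) ⟶ eval (L ++ M₂) from
      (evalIso L M₁).hom ≫ ((eval L) ◁ (f : eval M₁ ⟶ eval M₂)) ≫ (evalIso L M₂).inv
  whiskerRight {L₁ L₂} f N :=
    show eval (L₁ ++ N) ⟶ eval (L₂ ++ N) from
      (evalIso L₁ N).hom ≫ ((show eval L₁ ⟶ eval L₂ from f) ▷ (eval N)) ≫ (evalIso L₂ N).inv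
  tensorHom {L₁ M₁ L₂ M₂} f g :=
    show eval (L₁ ++ L₂) ⟶ eval (M₁ ++ M₂) from
      (evalIso L₁ L₂).hom ≫ ((show eval L₁ ⟶ eval M₁ from f) ⊗ₘ (show eval L₂ ⟶ eval M₂ from g)) ≫
        (evalIso M₁ M₂).inv
  associator L M N := eqToIso (List.append_assoc L M N)
  leftUnitor L := eqToIso rfl
  rightUnitor L := eqToIso (List.append_nil L)

lemma str_eqToHom {L M : List C} (h : L = M) :
    (eqToHom h : L ⟶ M) = eqToHom (congrArg eval h) := by subst h; rfl

lemma evalIso_nil (L : List C) :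
    (evalIso L ([] : List C)).hom ≫ (ρ_ (eval L)).hom =
      eqToHom (congrArg eval (List.append_nil L)) := by
  induction L with
  | nil =>
      show (λ_ (𝟙_ C)).inv ≫ (ρ_ (𝟙_ C)).hom = _
      rw [← unitors_equal, Iso.inv_hom_id]
      rfl
  | cons X L ih =>
      have key : ∀ (e : eval (L ++ []) ≅ eval L ⊗ 𝟙_ C),
          e.hom ≫ (ρ_ (eval L)).hom = eqToHom (congrArg eval (List.append_nil L)) →
          (X ◁ e.hom ≫ (α_ X (eval L) (𝟙_ C)).inv) ≫ (ρ_ (X ⊗ eval L)).hom =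
            X ◁ eqToHom (congrArg eval (List.append_nil L)) := by
        intro e he
        rw [assoc, ← whiskerLeft_rightUnitor, ← MonoidalCategory.whiskerLeft_comp, he]
      exact (key (evalIso L []) ih).trans (whiskerLeft_eqToHom _ _)

lemma evalIso_assoc (L M N : List C) :
    eqToHom (congrArg eval (List.append_assoc L M N)) =
      (evalIso (L ++ M) N).hom ≫ ((evalIso L M).hom ⊗ₘ 𝟙 (eval N)) ≫
        (α_ (eval L) (eval M) (eval N)).hom ≫ (𝟙 (eval L) ⊗ₘ (evalIso M N).inv) ≫
        (evalIso L (M ++ N)).inv := by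
  induction L with
  | nil =>
      show 𝟙 (eval (M ++ N)) = (evalIso M N).hom ≫ ((λ_ (eval M)).inv ⊗ₘ 𝟙 (eval N)) ≫
        (α_ (𝟙_ C) (eval M) (eval N)).hom ≫
        (𝟙 (𝟙_ C) ⊗ₘ (evalIso M N).inv) ≫ (λ_ (eval (M ++ N))).hom
      simp only [tensorHom_id, id_tensorHom]
      monoidal_nf
      simp only [Iso.trans_hom, Iso.refl_hom, Iso.symm_hom, whiskerRightIso_hom, id_comp, comp_id]
      rw [leftUnitor_tensor_hom]
      simp
  | cons X L ih =>
      have e : eqToHom (congrArg eval (List.append_assoc (X :: L) M N)) =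
          X ◁ eqToHom (congrArg eval (List.append_assoc L M N)) := by
        rw [whiskerLeft_eqToHom]
        rfl
      rw [e, ih]
      simp only [evalIso, eval, Iso.trans_hom, whiskerLeftIso_hom, Iso.symm_hom,
        Iso.trans_inv, whiskerLeftIso_inv, Iso.symm_inv, assoc, List.cons_append,
        tensorHom_id, id_tensorHom]
      monoidal

/-- Evaluation as a functor. -/
def evalFunctor : List C ⥤ C where
  obj := eval
  map f := f
  map_id _ := rfl
  map_comp _ _ := rfl

instance : (evalFunctor (C := C)).Faithful where
  map_injective h := h

open Monoidal in
/-- The inducing data for the monoidal structure on `List C`. -/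
def inducingData : InducingFunctorData (evalFunctor (C := C)) where
  μIso L M := (evalIso L M).symm
  εIso := Iso.refl _
  whiskerLeft_eq _ _ := by intros; simp [evalFunctor]; rfl
  whiskerRight_eq _ _ := by intros; simp [evalFunctor]; rfl
  tensorHom_eq _ _ := by simp [evalFunctor]; rfl
  associator_eq L M N := by
    have h1 : (evalFunctor (C := C)).map (α_ L M N).hom
        = eqToHom (congrArg eval (List.append_assoc L M N)) :=
      str_eqToHom (List.append_assoc L M N)
    rw [h1, evalIso_assoc]
    simp only [evalFunctor, tensorHom_id, id_tensorHom, Iso.trans_hom, Iso.symm_hom,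
      Iso.symm_symm_eq, tensorIso_hom, Iso.refl_hom, assoc]
    rfl
  leftUnitor_eq L := by
    have h1 : (evalFunctor (C := C)).map (λ_ L).hom = 𝟙 (eval L) := rfl
    rw [h1]
    show 𝟙 (eval L) =
      ((λ_ (eval L)).inv ≫ ((𝟙 (𝟙_ C)) ⊗ₘ 𝟙 (eval L))) ≫ (λ_ (eval L)).hom
    simp
  rightUnitor_eq L := by
    have h1 : (evalFunctor (C := C)).map (ρ_ L).hom
        = eqToHom (congrArg eval (List.append_nil L)) := str_eqToHom (List.append_nil L)
    rw [h1, ← evalIso_nil]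
    have key : (evalIso L ([] : List C)).hom ≫ (ρ_ (eval L)).hom
        = ((evalIso L ([] : List C)).hom ≫
            (𝟙 (eval L) ⊗ₘ 𝟙 (eval ([] : List C)))) ≫ (ρ_ (eval L)).hom := by
      rw [MonoidalCategory.id_tensorHom_id, comp_id]
    exact key

instance : MonoidalCategory (List C) := Monoidal.induced _ (inducingData (C := C))

instance : (evalFunctor (C := C)).Monoidal :=
  Monoidal.fromInducedMonoidal _ (inducingData (C := C))

/-- The inverse functor, sending an object to a singleton list. -/
def singFunctor : C ⥤ List C where
  obj X := [X]
  map {X Y} f := show X ⊗ 𝟙_ C ⟶ Y ⊗ 𝟙_ C from f ▷ 𝟙_ C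
  map_id X := show 𝟙 X ▷ 𝟙_ C = 𝟙 (X ⊗ 𝟙_ C) by simp
  map_comp f g := show (f ≫ g) ▷ 𝟙_ C = f ▷ 𝟙_ C ≫ g ▷ 𝟙_ C by simp

/-- The equivalence between `List C` and `C`. -/
def equiv : List C ≌ C where
  functor := evalFunctor
  inverse := singFunctor
  unitIso := NatIso.ofComponents
    (fun L => show L ≅ [eval L] from ⟨(ρ_ (eval L)).inv, (ρ_ (eval L)).hom,
      (ρ_ (eval L)).inv_hom_id, (ρ_ (eval L)).hom_inv_id⟩)
    (fun {L M} f => show (show eval L ⟶ eval M from f) ≫ (ρ_ (eval M)).inv =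
      (ρ_ (eval L)).inv ≫ ((show eval L ⟶ eval M from f) ▷ 𝟙_ C) by simp)
  counitIso := NatIso.ofComponents (fun X => ρ_ X)
    (fun {X Y} f => by
      simp [evalFunctor, singFunctor]
      exact (show ((ρ_ X).hom ≫ f ≫ (ρ_ Y).inv) ≫ (ρ_ Y).hom = (ρ_ X).hom ≫ f by simp))
  functor_unitIso_comp L := show (ρ_ (eval L)).inv ≫ (ρ_ (eval L)).hom = 𝟙 _ by simp

instance : (equiv (C := C)).functor.Monoidal :=
  inferInstanceAs ((evalFunctor (C := C)).Monoidal)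

noncomputable instance : (singFunctor (C := C)).Monoidal := (equiv (C := C)).inverseMonoidal

noncomputable instance : (equiv (C := C)).inverse.Monoidal :=
  inferInstanceAs ((singFunctor (C := C)).Monoidal)

instance : (equiv (C := C)).IsMonoidal := by
  exact (inferInstance : letI := (equiv (C := C)).toAdjunction.rightAdjointLaxMonoidal
    (equiv (C := C)).toAdjunction.IsMonoidal)

instance : NatTrans.IsMonoidal (equiv (C := C)).unitIso.hom :=
  inferInstanceAs (NatTrans.IsMonoidal (equiv (C := C)).unit)

instance : NatTrans.IsMonoidal (equiv (C := C)).counitIso.hom :=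
  inferInstanceAs (NatTrans.IsMonoidal (equiv (C := C)).counit)

end Str

/-- Every monoidal category is monoidally equivalent to a strict monoidal category. -/
theorem exists_strictification
    (C : Type u) [Category.{v} C] [MonoidalCategory C] :
    ∃ (D : Type u) (catD : Category.{v} D) (monD : MonoidalCategory D),
      IsStrictMonoidal D ∧ Nonempty (MonoidalEquivalenceData D C) := by
  refine ⟨List C, inferInstance, inferInstance,
    ⟨⟨fun L M N => List.append_assoc L M N, fun _ _ _ => rfl⟩,
      ⟨fun L => rfl, fun _ => rfl⟩,
      ⟨fun L => List.append_nil L, fun _ => rfl⟩⟩, ⟨?_⟩⟩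
  letI mF : (Str.evalFunctor (C := C)).Monoidal := inferInstance
  letI mG : (Str.singFunctor (C := C)).Monoidal := inferInstance
  have c : Str.singFunctor ⋙ Str.evalFunctor ≅ 𝟭 C := (Str.equiv (C := C)).counitIso
  have u : Str.evalFunctor ⋙ Str.singFunctor ≅ 𝟭 (List C) := (Str.equiv (C := C)).unitIso.symm
  exact
    { F := Str.evalFunctor
      G := Str.singFunctor
      counitIso := (Str.equiv (C := C)).counitIso
      unitIso := (Str.equiv (C := C)).unitIso.symm
      counit_monoidal := inferInstanceAs (NatTrans.IsMonoidal (Str.equiv (C := C)).counitIso.hom)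
      unit_monoidal := inferInstanceAs (NatTrans.IsMonoidal (Str.equiv (C := C)).unitIso.inv) }

end Strictification
end
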